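/- For each w ∈ W there exist unique coefficients b⁺_{w,v} ∈ Q and b⁻_{w,v} ∈ Q (v ∈ W) such that δ_w = Σ_{v∈W} b⁺_{w,v}·τ⁺_v = Σ_{v∈W} b⁻_{w,v}·τ⁻_v as operators on Q (scalars acting by multiplication). Moreover b⁺_{w,v} = b⁻_{w,v} = 0 unless v ≤ w in the Bruhat order, b⁺_{w,w} = ∏_{α∈Φ⁺, w^{−1}α∈−Φ⁺} (1−e^{−α})/(q−e^{α}), and b⁻_{w,w} = ∏_{α∈Φ⁺, w^{−1}α∈−Φ⁺} (1−e^{α})/(1−q e^{−α}). In particular, each of {τ⁺_v}_{v∈W} and {τ⁻_v}_{v∈W} is a basis of the left Q-vector space Q_W with basis {δ_w}_{w∈W}. -/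

import Mathlib

/-
STATEMENT 4: For each w ∈ W there exist unique coefficients b⁺_{w,v}, b⁻_{w,v} ∈ Q (v ∈ W)
with δ_w = Σ_v b⁺_{w,v}·τ⁺_v = Σ_v b⁻_{w,v}·τ⁻_v as operators on Q.  Moreover
b^±_{w,v} = 0 unless v ≤ w in the Bruhat order,
b⁺_{w,w} = ∏_{α∈Φ⁺, w⁻¹α∈−Φ⁺} (1−e^{−α})/(q−e^{α}),
b⁻_{w,w} = ∏_{α∈Φ⁺, w⁻¹α∈−Φ⁺} (1−e^{α})/(1−q e^{−α}).
In particular each of {τ⁺_v}, {τ⁻_v} is a basis of the left Q-vector space Q_W spanned by the δ_w.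
-/

open scoped Classical

set_option maxHeartbeats 1000000
set_option synthInstance.maxHeartbeats 400000

noncomputable section

/-- `Q = Frac(ℤ[q^{1/2},q^{-1/2}][Λ])`. -/
abbrev Qf (Λ : Type*) [AddCommGroup Λ] : Type _ :=
  FractionRing (AddMonoidAlgebra (LaurentPolynomial ℤ) Λ)

/-- `e^λ ∈ Q`. -/
def E {Λ : Type*} [AddCommGroup Λ] (l : Λ) : Qf Λ :=
  algebraMap (AddMonoidAlgebra (LaurentPolynomial ℤ) Λ) (Qf Λ) (AddMonoidAlgebra.single l 1)

/-- `q^{1/2} ∈ Q`. -/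
def qh (Λ : Type*) [AddCommGroup Λ] : Qf Λ :=
  algebraMap (AddMonoidAlgebra (LaurentPolynomial ℤ) Λ) (Qf Λ)
    (AddMonoidAlgebra.single 0 (LaurentPolynomial.T 1))

variable {n : ℕ} {W : Type*} [Group W] {M : CoxeterMatrix (Fin n)} (cs : CoxeterSystem M W)
variable {Λ : Type*} [AddCommGroup Λ] [IsDomain (AddMonoidAlgebra (LaurentPolynomial ℤ) Λ)]

/-- The (strong) Bruhat order on `W`: `u ≤ w` iff some reduced word for `w` has a subword
whose product is `u`. -/
def BruhatLE (u w : W) : Prop :=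
  ∃ ω : List (Fin n), cs.wordProd ω = w ∧ ω.length = cs.length w ∧
    ∃ ω' : List (Fin n), ω'.Sublist ω ∧ cs.wordProd ω' = u

/-- The Demazure–Lusztig operator `τ⁺_i`. -/
def tauP (α : Fin n → Λ) (π : W →* (Qf Λ ≃+* Qf Λ)) (i : Fin n) (p : Qf Λ) : Qf Λ :=
  (qh Λ ^ 2 - 1) / (1 - E (α i)) * p +
    (qh Λ ^ 2 - E (α i)) / (1 - E (-(α i))) * (π (cs.simple i) p)

/-- The Demazure–Lusztig operator `τ⁻_i`. -/
def tauM (α : Fin n → Λ) (π : W →* (Qf Λ ≃+* Qf Λ)) (i : Fin n) (p : Qf Λ) : Qf Λ :=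
  (qh Λ ^ 2 - 1) / (1 - E (α i)) * p +
    (1 - qh Λ ^ 2 * E (-(α i))) / (1 - E (α i)) * (π (cs.simple i) p)

/-- Composite `τ⁺_{i_1} ∘ ⋯ ∘ τ⁺_{i_l}` along a word `ω = [i_1, …, i_l]`. -/
def tauPcomp (α : Fin n → Λ) (π : W →* (Qf Λ ≃+* Qf Λ)) (ω : List (Fin n)) : Qf Λ → Qf Λ :=
  ω.foldr (fun i g => tauP cs α π i ∘ g) id

/-- Composite `τ⁻_{i_1} ∘ ⋯ ∘ τ⁻_{i_l}` along a word `ω = [i_1, …, i_l]`. -/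
def tauMcomp (α : Fin n → Λ) (π : W →* (Qf Λ ≃+* Qf Λ)) (ω : List (Fin n)) : Qf Λ → Qf Λ :=
  ω.foldr (fun i g => tauM cs α π i ∘ g) id

/-- The multiplicative group structure (composition) on `Λ ≃+ Λ` that the older Mathlib
provided as `AddAut.group`; the current Mathlib makes `AddAut` an additive group instead. -/
instance addEquivSelfGroupOld (A : Type*) [Add A] : Group (A ≃+ A) where
  mul g h := AddEquiv.trans h g
  one := AddEquiv.refl _
  inv := AddEquiv.symm
  mul_assoc _ _ _ := rfl
  one_mul _ := rfl
  mul_one _ := rfl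
  inv_mul_cancel := AddEquiv.self_trans_symm

namespace DLaux
set_option linter.unusedSectionVars false

section alg
variable {Λ : Type*} [AddCommGroup Λ] [IsDomain (AddMonoidAlgebra (LaurentPolynomial ℤ) Λ)]

lemma amap_inj : Function.Injective
    (algebraMap (AddMonoidAlgebra (LaurentPolynomial ℤ) Λ) (Qf Λ)) :=
  IsFractionRing.injective _ _

lemma E_inj : Function.Injective (E (Λ := Λ)) := by
  intro l l' h
  have := amap_inj h
  rcases (Finsupp.single_eq_single_iff _ _ _ _).mp (congrArg AddMonoidAlgebra.coeff this) with ⟨h1, _⟩ | ⟨h1, _⟩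
  · exact h1
  · exact absurd h1 one_ne_zero

lemma E_zero : E (0 : Λ) = 1 := by
  rw [E, ← AddMonoidAlgebra.one_def, map_one]

lemma E_add (l l' : Λ) : E (l + l') = E l * E l' := by
  rw [E, E, E, ← map_mul]
  congr 1
  rw [AddMonoidAlgebra.single_mul_single, one_mul]

lemma E_ne_zero (l : Λ) : E (l : Λ) ≠ 0 := by
  intro h
  rw [show (0 : Qf Λ) = algebraMap (AddMonoidAlgebra (LaurentPolynomial ℤ) Λ) (Qf Λ) 0 by
    simp] at h
  have := amap_inj h
  exact one_ne_zero (AddMonoidAlgebra.single_eq_zero.mp this)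

lemma E_ne_one {l : Λ} (h : l ≠ 0) : E l ≠ 1 := by
  intro hh
  rw [← E_zero] at hh
  exact h (E_inj hh)

lemma qh_sq : (qh Λ) ^ 2 = algebraMap (AddMonoidAlgebra (LaurentPolynomial ℤ) Λ) (Qf Λ)
    (AddMonoidAlgebra.single 0 (LaurentPolynomial.T 2)) := by
  rw [qh, ← map_pow]
  congr 1
  rw [sq, AddMonoidAlgebra.single_mul_single, add_zero, ← LaurentPolynomial.T_add]
  norm_num

lemma T_two_ne_one : (LaurentPolynomial.T 2 : LaurentPolynomial ℤ) ≠ 1 := by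
  intro h
  have h2 : AddMonoidAlgebra.coeff ((LaurentPolynomial.T 2 : LaurentPolynomial ℤ) : AddMonoidAlgebra ℤ ℤ) 2
      = AddMonoidAlgebra.coeff (1 : AddMonoidAlgebra ℤ ℤ) 2 := by rw [h]
  rw [LaurentPolynomial.T, AddMonoidAlgebra.coeff_single, Finsupp.single_eq_same, AddMonoidAlgebra.one_def,
    AddMonoidAlgebra.coeff_single, Finsupp.single_apply] at h2
  rw [if_neg (by norm_num)] at h2
  exact one_ne_zero h2

lemma T_ne_zero' (n : ℤ) : (LaurentPolynomial.T n : LaurentPolynomial ℤ) ≠ 0 := by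
  rw [LaurentPolynomial.T]
  exact fun h => one_ne_zero (AddMonoidAlgebra.single_eq_zero.mp h)

lemma qh_sq_ne_E (l : Λ) : (qh Λ) ^ 2 ≠ E l := by
  intro h
  rw [qh_sq, E] at h
  rcases (Finsupp.single_eq_single_iff _ _ _ _).mp (congrArg AddMonoidAlgebra.coeff (amap_inj h)) with ⟨_, h2⟩ | ⟨h1, _⟩
  · exact T_two_ne_one h2
  · exact T_ne_zero' _ h1

lemma qh_sq_E_ne_one (l : Λ) : (qh Λ) ^ 2 * E l ≠ 1 := by
  intro h
  rw [qh_sq, E, ← map_mul, AddMonoidAlgebra.single_mul_single, mul_one,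
    show (1 : Qf Λ) = algebraMap (AddMonoidAlgebra (LaurentPolynomial ℤ) Λ) (Qf Λ) 1 by simp,
    show (1 : AddMonoidAlgebra (LaurentPolynomial ℤ) Λ) = AddMonoidAlgebra.single 0 1 from rfl]
    at h
  rcases (Finsupp.single_eq_single_iff _ _ _ _).mp (congrArg AddMonoidAlgebra.coeff (amap_inj h)) with ⟨_, h2⟩ | ⟨h1, _⟩
  · exact T_two_ne_one h2
  · exact T_ne_zero' _ h1

/-- torsion-freeness from the domain hypothesis -/
lemma tf {l : Λ} (hl : l ≠ 0) {k : ℕ} (hk : 0 < k) : k • l ≠ 0 := by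
  intro h
  set x : AddMonoidAlgebra (LaurentPolynomial ℤ) Λ := AddMonoidAlgebra.single l 1 with hx
  have hxk : x ^ k = 1 := by
    rw [hx, AddMonoidAlgebra.single_pow, h, one_pow]
    rfl
  have hx1 : x - 1 ≠ 0 := by
    rw [sub_ne_zero, hx]
    intro hh
    rw [show (1 : AddMonoidAlgebra (LaurentPolynomial ℤ) Λ) = AddMonoidAlgebra.single 0 1 from
      rfl] at hh
    rcases (Finsupp.single_eq_single_iff _ _ _ _).mp (congrArg AddMonoidAlgebra.coeff hh) with ⟨h1, _⟩ | ⟨h1, _⟩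
    · exact hl h1
    · exact one_ne_zero h1
  have hs : (∑ i ∈ Finset.range k, x ^ i) = 0 := by
    have := geom_sum_mul x k
    rw [hxk, sub_self] at this
    rcases mul_eq_zero.mp this with h' | h'
    · exact h'
    · exact absurd h' hx1
  have happ : AddMonoidAlgebra.coeff ((∑ i ∈ Finset.range k, x ^ i) : AddMonoidAlgebra (LaurentPolynomial ℤ) Λ) 0 = 0 := by
    rw [hs]; rfl
  rw [AddMonoidAlgebra.coeff_sum, Finset.sum_apply'] at happ
  have hterm : ∀ i ∈ Finset.range k, AddMonoidAlgebra.coeff (x ^ i : AddMonoidAlgebra (LaurentPolynomial ℤ) Λ) 0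
      = if i • l = 0 then 1 else 0 := by
    intro i _
    rw [hx, AddMonoidAlgebra.single_pow, one_pow, AddMonoidAlgebra.coeff_single]
    exact Finsupp.single_apply
  rw [Finset.sum_congr rfl hterm] at happ
  -- evaluate the Laurent polynomial sum at exponent 0
  have happ2 : AddMonoidAlgebra.coeff ((∑ i ∈ Finset.range k, if i • l = 0 then (1 : LaurentPolynomial ℤ) else 0) : LaurentPolynomial ℤ) 0 = 0 := by
    rw [happ]; rfl
  rw [AddMonoidAlgebra.coeff_sum, Finsupp.finset_sum_apply] at happ2
  have hterm2 : ∀ i ∈ Finset.range k,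
      AddMonoidAlgebra.coeff ((if i • l = 0 then (1 : LaurentPolynomial ℤ) else 0) : LaurentPolynomial ℤ) 0
      = if i • l = 0 then 1 else 0 := by
    intro i _
    split
    · rw [AddMonoidAlgebra.one_def, AddMonoidAlgebra.coeff_single]; exact Finsupp.single_eq_same
    · rfl
  rw [Finset.sum_congr rfl hterm2] at happ2
  have hpos : 0 < ∑ i ∈ Finset.range k, if i • l = 0 then (1 : ℤ) else 0 := by
    apply Finset.sum_pos'
    · intro i _; split <;> simp
    · exact ⟨0, Finset.mem_range.mpr hk, by simp⟩
  omega

lemma tf_int {l : Λ} (hl : l ≠ 0) {k : ℤ} (h : k • l = 0) : k = 0 := by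
  by_contra hk
  have h2 : ((k.natAbs : ℤ)) • l = 0 := by
    rcases Int.natAbs_eq k with he | he
    · rw [← he]; exact h
    · rw [he, neg_smul, neg_eq_zero] at h
      exact h
  rw [natCast_zsmul] at h2
  exact tf hl (by omega) h2

end alg
end DLaux
namespace DLaux
set_option linter.unusedSectionVars false
section roots
variable {n : ℕ} {W : Type*} [Group W] {M : CoxeterMatrix (Fin n)}
variable {Λ : Type*} [AddCommGroup Λ] [IsDomain (AddMonoidAlgebra (LaurentPolynomial ℤ) Λ)]

lemma sig_mul (σ : W →* (Λ ≃+ Λ)) (a b : W) (l : Λ) : σ (a * b) l = σ a (σ b l) := by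
  rw [map_mul]; rfl

lemma sig_one (σ : W →* (Λ ≃+ Λ)) (l : Λ) : σ (1 : W) l = l := by rw [map_one]; rfl

lemma sig_inv_apply (σ : W →* (Λ ≃+ Λ)) (u : W) (l : Λ) : σ u⁻¹ (σ u l) = l := by
  rw [← sig_mul, inv_mul_cancel, sig_one]

lemma sig_apply_inv (σ : W →* (Λ ≃+ Λ)) (u : W) (l : Λ) : σ u (σ u⁻¹ l) = l := by
  rw [← sig_mul, mul_inv_cancel, sig_one]

/-- Bundled root-system data for a Coxeter system. -/
structure RootCtx (cs : CoxeterSystem M W) (Λ : Type*) [AddCommGroup Λ] where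
  σ : W →* (Λ ≃+ Λ)
  Φp : Finset Λ
  α : Fin n → Λ
  αv : Fin n → (Λ →+ ℤ)
  hfaith : Function.Injective σ
  hαmem : ∀ i, α i ∈ Φp
  hrefl : ∀ (i : Fin n) (l : Λ), σ (cs.simple i) l = l - αv i l • α i
  hpair : ∀ i, αv i (α i) = 2
  hperm : ∀ i, ∀ b ∈ Φp, b ≠ α i → σ (cs.simple i) b ∈ Φp
  hdisj : ∀ b ∈ Φp, -b ∉ Φp

variable {cs : CoxeterSystem M W} (C : RootCtx cs Λ)

lemma RootCtx.alpha_ne_zero (i : Fin n) : C.α i ≠ 0 := by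
  intro h
  have := C.hpair i
  rw [h, map_zero] at this
  norm_num at this

lemma RootCtx.mem_ne_zero {b : Λ} (hb : b ∈ C.Φp) : b ≠ 0 := by
  rintro rfl
  exact C.hdisj 0 hb (by simpa using hb)

lemma RootCtx.sig_simple_alpha (i : Fin n) : C.σ (cs.simple i) (C.α i) = -(C.α i) := by
  rw [C.hrefl, C.hpair]
  rw [show ((2 : ℤ) • C.α i) = C.α i + C.α i by rw [two_smul]]
  abel

lemma RootCtx.sig_simple_invol (i : Fin n) (l : Λ) :
    C.σ (cs.simple i) (C.σ (cs.simple i) l) = l := by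
  rw [← sig_mul, cs.simple_mul_simple_self, sig_one]

/-- `a` is a root. -/
def RootCtx.IsRoot (a : Λ) : Prop := a ∈ C.Φp ∨ -a ∈ C.Φp

lemma RootCtx.simple_root_stab (i : Fin n) {a : Λ} (ha : C.IsRoot a) :
    C.IsRoot (C.σ (cs.simple i) a) := by
  rcases ha with ha | ha
  · by_cases hai : a = C.α i
    · subst hai
      rw [C.sig_simple_alpha]
      exact Or.inr (by rwa [neg_neg])
    · exact Or.inl (C.hperm i a ha hai)
  · by_cases hai : -a = C.α i
    · left
      rw [show a = -(C.α i) by rw [← hai, neg_neg], map_neg, C.sig_simple_alpha, neg_neg]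
      exact C.hαmem i
    · right
      rw [← map_neg]
      exact C.hperm i (-a) ha hai

lemma RootCtx.root_stab (w : W) {a : Λ} (ha : C.IsRoot a) : C.IsRoot (C.σ w a) := by
  obtain ⟨ω, rfl⟩ : ∃ ω : List (Fin n), cs.wordProd ω = w := by
    obtain ⟨ω, _, hw⟩ := cs.exists_reduced_word w
    exact ⟨ω, hw.symm⟩
  induction ω with
  | nil => rw [cs.wordProd_nil, sig_one]; exact ha
  | cons i ω ih =>
    rw [cs.wordProd_cons, sig_mul]
    exact C.simple_root_stab i ih

lemma RootCtx.root_dichot (w : W) {a : Λ} (ha : a ∈ C.Φp) (h : C.σ w a ∉ C.Φp) :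
    -(C.σ w a) ∈ C.Φp := by
  rcases C.root_stab w (Or.inl ha) with h' | h'
  · exact absurd h' h
  · exact h'

/-- A root determines its reflection. -/
lemma RootCtx.refl_of_root [Fintype W] {u : W} {j i : Fin n}
    (hσα : C.σ u (C.α j) = C.α i) :
    u * cs.simple j * u⁻¹ = cs.simple i := by
  set t := u * cs.simple j * u⁻¹ with ht
  set x := cs.simple i * t with hx
  have huaj : C.σ u⁻¹ (C.α i) = C.α j := by rw [← hσα, sig_inv_apply]
  have ht_apply : ∀ l : Λ, C.σ t l = l - (C.αv j (C.σ u⁻¹ l)) • C.α i := by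
    intro l
    rw [ht, sig_mul, sig_mul, C.hrefl, map_sub, map_zsmul, sig_apply_inv, hσα]
  set f : Λ → ℤ := fun l => C.αv j (C.σ u⁻¹ l) - C.αv i l with hf
  have hx_apply : ∀ l : Λ, C.σ x l = l + f l • C.α i := by
    intro l
    rw [hx, sig_mul, ht_apply, C.hrefl]
    rw [map_sub, map_zsmul, C.hpair, hf]
    rw [smul_eq_mul, mul_two]
    simp only [sub_smul, add_smul]
    abel
  have hfshift : ∀ (l : Λ) (k : ℤ), f (l + k • C.α i) = f l := by
    intro l k
    rw [hf]
    simp only [map_add, map_zsmul, huaj, C.hpair, smul_eq_mul]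
    ring
  have hx_pow : ∀ (m : ℕ) (l : Λ), C.σ (x ^ m) l = l + ((m : ℤ) * f l) • C.α i := by
    intro m
    induction m with
    | zero => intro l; rw [pow_zero, sig_one]; simp
    | succ m ih =>
      intro l
      rw [pow_succ, sig_mul, ih, hx_apply, hfshift, add_assoc, ← add_smul]
      congr 2
      push_cast
      ring
  have hford : ∀ l : Λ, f l = 0 := by
    intro l
    have hm : x ^ (orderOf x) = 1 := pow_orderOf_eq_one x
    have hmpos : 0 < orderOf x := orderOf_pos x
    have hpow := hx_pow (orderOf x) l
    rw [hm, sig_one] at hpow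
    have h0 : ((orderOf x : ℤ) * f l) • C.α i = 0 := by
      have := hpow.symm
      rwa [add_eq_left] at this
    have h1 := tf_int (C.alpha_ne_zero i) h0
    rcases mul_eq_zero.mp h1 with h' | h'
    · exfalso
      have : (0 : ℤ) < (orderOf x : ℤ) := by exact_mod_cast hmpos
      omega
    · exact h'
  have hxone : x = 1 := by
    apply C.hfaith
    rw [map_one]
    apply DFunLike.ext
    intro l
    have h2 := hx_apply l
    rw [hford l] at h2
    simp at h2; exact h2
  have hit : cs.simple i * t = 1 := hxone
  calc t = cs.simple i * (cs.simple i * t) := by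
        rw [← mul_assoc, cs.simple_mul_simple_self, one_mul]
    _ = cs.simple i := by rw [hit, mul_one]

/-- General form: equal roots give equal reflections. -/
lemma RootCtx.refl_of_root' [Fintype W] {u u' : W} {j j' : Fin n}
    (h : C.σ u (C.α j) = C.σ u' (C.α j')) :
    u * cs.simple j * u⁻¹ = u' * cs.simple j' * u'⁻¹ := by
  have h2 : C.σ (u'⁻¹ * u) (C.α j) = C.α j' := by
    rw [sig_mul, h, sig_inv_apply]
  have h3 := C.refl_of_root h2
  have : u' * ((u'⁻¹ * u) * cs.simple j * (u'⁻¹ * u)⁻¹) * u'⁻¹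
      = u' * cs.simple j' * u'⁻¹ := by rw [h3]
  rw [← this]
  group

/-- Negated root version. -/
lemma RootCtx.refl_of_root_neg [Fintype W] {u u' : W} {j j' : Fin n}
    (h : C.σ u (C.α j) = -(C.σ u' (C.α j'))) :
    u * cs.simple j * u⁻¹ = u' * cs.simple j' * u'⁻¹ := by
  have h2 : C.σ u (C.α j) = C.σ (u' * cs.simple j') (C.α j') := by
    rw [sig_mul, C.sig_simple_alpha, map_neg, h]
  have h3 := C.refl_of_root' h2
  rw [h3]
  group

end roots
end DLaux
namespace DLaux
set_option linter.unusedSectionVars false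
section words
variable {n : ℕ} {W : Type*} [Group W] {M : CoxeterMatrix (Fin n)}
variable {Λ : Type*} [AddCommGroup Λ] [IsDomain (AddMonoidAlgebra (LaurentPolynomial ℤ) Λ)]
variable {cs : CoxeterSystem M W} (C : RootCtx cs Λ)

end words

section words2
variable {n : ℕ} {W : Type*} [Group W] {M : CoxeterMatrix (Fin n)}
variable {Λ : Type*} [AddCommGroup Λ] [IsDomain (AddMonoidAlgebra (LaurentPolynomial ℤ) Λ)]
variable {cs : CoxeterSystem M W}

/-- The roots attached to a word. -/
def RootCtx.wroots (Cc : RootCtx cs Λ) : List (Fin n) → List Λ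
  | [] => []
  | i :: ω => Cc.α i :: (Cc.wroots ω).map (Cc.σ (cs.simple i))

variable (C : RootCtx cs Λ)

@[simp] lemma RootCtx.wroots_nil : C.wroots [] = [] := rfl

lemma RootCtx.wroots_cons (i : Fin n) (ω : List (Fin n)) :
    C.wroots (i :: ω) = C.α i :: (C.wroots ω).map (C.σ (cs.simple i)) := rfl

lemma RootCtx.wroots_form' : ∀ (ω : List (Fin n)) (a : Λ), a ∈ C.wroots ω →
    ∃ (φ : List (Fin n)) (j : Fin n) (ψ : List (Fin n)),
      ω = φ ++ j :: ψ ∧ a = C.σ (cs.wordProd φ) (C.α j) := by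
  intro ω
  induction ω with
  | nil => intro a h; simp [RootCtx.wroots] at h
  | cons i ω ih =>
    intro a h
    rw [C.wroots_cons] at h
    rcases List.mem_cons.mp h with h | h
    · exact ⟨[], i, ω, by simp, by rw [h, cs.wordProd_nil, sig_one]⟩
    · obtain ⟨b, hb, hab⟩ := List.mem_map.mp h
      obtain ⟨φ, j, ψ, hω, hbf⟩ := ih b hb
      refine ⟨i :: φ, j, ψ, by rw [hω]; rfl, ?_⟩
      rw [← hab, hbf, cs.wordProd_cons, sig_mul]

lemma RootCtx.wroots_form {a : Λ} {ω : List (Fin n)} (h : a ∈ C.wroots ω) :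
    ∃ (φ : List (Fin n)) (j : Fin n) (ψ : List (Fin n)),
      ω = φ ++ j :: ψ ∧ a = C.σ (cs.wordProd φ) (C.α j) :=
  C.wroots_form' ω a h

lemma RootCtx.wroots_of_decomp : ∀ (φ : List (Fin n)) (j : Fin n) (ψ : List (Fin n)),
    C.σ (cs.wordProd φ) (C.α j) ∈ C.wroots (φ ++ j :: ψ) := by
  intro φ
  induction φ with
  | nil =>
    intro j ψ
    rw [cs.wordProd_nil, sig_one, List.nil_append, C.wroots_cons]
    exact List.mem_cons_self
  | cons i φ ih =>
    intro j ψ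
    rw [List.cons_append, C.wroots_cons, cs.wordProd_cons, sig_mul]
    exact List.mem_cons_of_mem _ (List.mem_map_of_mem (ih j ψ))

/-- Exchange-type lemma: if the root of the reflection `u s_j u⁻¹` occurs among
the roots of `ω`, then multiplying by it deletes a letter. -/
lemma RootCtx.exch [Fintype W] {ω : List (Fin n)} {u : W} {j : Fin n}
    (h : C.σ u (C.α j) ∈ C.wroots ω) :
    ∃ φ, φ.Sublist ω ∧ cs.wordProd φ = (u * cs.simple j * u⁻¹) * cs.wordProd ω
      ∧ φ.length + 1 = ω.length := by
  obtain ⟨φ, j', ψ, hω, hform⟩ := C.wroots_form h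
  have hrefl2 := C.refl_of_root' hform
  refine ⟨φ ++ ψ, ?_, ?_, ?_⟩
  · rw [hω]
    exact List.Sublist.append_left (List.sublist_cons_self j' ψ) φ
  · have hs : cs.simple j' * cs.simple j' = 1 := cs.simple_mul_simple_self j'
    rw [hω, hrefl2, cs.wordProd_append, cs.wordProd_append, cs.wordProd_cons]
    symm
    calc cs.wordProd φ * cs.simple j' * (cs.wordProd φ)⁻¹ *
          (cs.wordProd φ * (cs.simple j' * cs.wordProd ψ))
        = cs.wordProd φ * (cs.simple j' * cs.simple j') * cs.wordProd ψ := by group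
      _ = cs.wordProd φ * cs.wordProd ψ := by rw [hs, mul_one]
  · rw [hω]
    simp only [List.length_append, List.length_cons]
    omega

lemma RootCtx.exch_simple [Fintype W] {ω : List (Fin n)} {i : Fin n}
    (h : C.α i ∈ C.wroots ω) :
    ∃ φ, φ.Sublist ω ∧ cs.wordProd φ = cs.simple i * cs.wordProd ω
      ∧ φ.length + 1 = ω.length := by
  have h' : C.σ (1 : W) (C.α i) ∈ C.wroots ω := by rwa [sig_one]
  obtain ⟨φ, h1, h2, h3⟩ := C.exch h'
  exact ⟨φ, h1, by rwa [one_mul, inv_one, mul_one] at h2, h3⟩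

/-- The main inversion-set theorem: for reduced `ω` with product `w`, the roots of `ω`
are distinct and are exactly the positive roots made negative by `w⁻¹`. -/
lemma RootCtx.main [Fintype W] : ∀ (N : ℕ) (ω : List (Fin n)), ω.length ≤ N →
    cs.IsReduced ω →
    (C.wroots ω).Nodup ∧
    (∀ a : Λ, a ∈ C.wroots ω ↔ a ∈ C.Φp ∧ -(C.σ (cs.wordProd ω)⁻¹ a) ∈ C.Φp) := by
  intro N
  induction N with
  | zero =>
    intro ω hlen _
    have hω : ω = [] := List.length_eq_zero_iff.mp (by omega)
    subst hω
    constructor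
    · exact List.nodup_nil
    · intro a
      simp only [RootCtx.wroots, List.not_mem_nil, false_iff, not_and]
      intro ha h2
      rw [cs.wordProd_nil, inv_one, sig_one] at h2
      exact (C.hdisj a ha h2).elim
  | succ N ihN =>
    intro ω hlen hred
    match ω with
    | [] =>
      constructor
      · exact List.nodup_nil
      · intro a
        simp only [RootCtx.wroots, List.not_mem_nil, false_iff, not_and]
        intro ha h2
        rw [cs.wordProd_nil, inv_one, sig_one] at h2
        exact (C.hdisj a ha h2).elim
    | i :: ω' =>
      have hred' : cs.IsReduced ω' := by
        have := hred.drop 1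
        simpa using this
      have hlen' : ω'.length ≤ N := by simp at hlen; omega
      obtain ⟨ihnd, ihiff⟩ := ihN ω' hlen' hred'
      set w' := cs.wordProd ω' with hw'
      have hlw' : cs.length w' = ω'.length := hred'
      have hlw : cs.length (cs.wordProd (i :: ω')) = ω'.length + 1 := by
        have := hred
        rw [CoxeterSystem.IsReduced] at this
        simpa using this
      -- Claim 1 : α i is not an inversion of w'
      have claim1 : -(C.σ w'⁻¹ (C.α i)) ∉ C.Φp := by
        intro hmem
        have hai : C.α i ∈ C.wroots ω' := (ihiff (C.α i)).mpr ⟨C.hαmem i, hmem⟩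
        obtain ⟨φ, hsub, hprod, hlen2⟩ := C.exch_simple hai
        have h1 : cs.length (cs.simple i * w') ≤ φ.length :=
          hprod ▸ cs.length_wordProd_le φ
        have h2 : cs.simple i * w' = cs.wordProd (i :: ω') := (cs.wordProd_cons i ω').symm
        rw [h2, hlw] at h1
        omega
      have claim2 : C.σ w'⁻¹ (C.α i) ∈ C.Φp := by
        by_contra hc
        exact claim1 (C.root_dichot w'⁻¹ (C.hαmem i) hc)
      have hinv : (cs.wordProd (i :: ω'))⁻¹ = w'⁻¹ * cs.simple i := by
        rw [cs.wordProd_cons, mul_inv_rev, cs.inv_simple]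
      constructor
      · rw [C.wroots_cons]
        refine List.nodup_cons.mpr ⟨?_, ihnd.map (C.σ (cs.simple i)).injective⟩
        intro hmem
        obtain ⟨b, hb, hab⟩ := List.mem_map.mp hmem
        have hbΦ : b ∈ C.Φp := ((ihiff b).mp hb).1
        have hneg : b = -(C.α i) := by
          have := congrArg (C.σ (cs.simple i)) hab
          rwa [C.sig_simple_invol, C.sig_simple_alpha] at this
        rw [hneg] at hbΦ
        exact C.hdisj (C.α i) (C.hαmem i) hbΦ
      · intro a
        rw [C.wroots_cons]
        constructor
        · intro hmem
          rcases List.mem_cons.mp hmem with rfl | hmem'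
          · refine ⟨C.hαmem i, ?_⟩
            rw [hinv, sig_mul, C.sig_simple_alpha, map_neg, neg_neg]
            exact claim2
          · obtain ⟨b, hb, hab⟩ := List.mem_map.mp hmem'
            obtain ⟨hbΦ, hbinv⟩ := (ihiff b).mp hb
            have hbne : b ≠ C.α i := by
              rintro rfl
              exact claim1 hbinv
            refine ⟨hab ▸ C.hperm i b hbΦ hbne, ?_⟩
            rw [← hab, hinv, sig_mul, C.sig_simple_invol]
            exact hbinv
        · rintro ⟨haΦ, hainv⟩
          by_cases hai : a = C.α i
          · rw [hai]; exact List.mem_cons_self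
          · have hb : C.σ (cs.simple i) a ∈ C.Φp := C.hperm i a haΦ hai
            have hbinv : -(C.σ w'⁻¹ (C.σ (cs.simple i) a)) ∈ C.Φp := by
              rw [← sig_mul, ← hinv]
              exact hainv
            have : C.σ (cs.simple i) a ∈ C.wroots ω' :=
              (ihiff _).mpr ⟨hb, hbinv⟩
            refine List.mem_cons_of_mem _ (List.mem_map.mpr ⟨_, this, ?_⟩)
            exact C.sig_simple_invol i a

/-- Characterization of simple descent via roots. -/
lemma RootCtx.simple_descent_iff [Fintype W] (w : W) (i : Fin n) :
    cs.length (cs.simple i * w) < cs.length w ↔ -(C.σ w⁻¹ (C.α i)) ∈ C.Φp := by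
  constructor
  · intro h
    obtain ⟨χ, hχred, hχ⟩ := cs.exists_reduced_word' (cs.simple i * w)
    have hw : w = cs.wordProd (i :: χ) := by
      rw [cs.wordProd_cons, ← hχ, ← mul_assoc, cs.simple_mul_simple_self, one_mul]
    have hredw : cs.IsReduced (i :: χ) := by
      rw [CoxeterSystem.IsReduced, ← hw]
      have h1 : cs.length w ≤ χ.length + 1 := by
        rw [hw]
        simpa using cs.length_wordProd_le (i :: χ)
      have h2 : χ.length = cs.length (cs.simple i * w) := by
        rw [hχ]; exact hχred.symm
      simp only [List.length_cons]
      omega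
    have hmem : C.α i ∈ C.wroots (i :: χ) := by
      rw [C.wroots_cons]; exact List.mem_cons_self
    have := ((C.main (χ.length + 1) (i :: χ) (by simp) hredw).2 (C.α i)).mp hmem
    rw [← hw] at this
    exact this.2
  · intro h
    obtain ⟨ω, hωred, hω⟩ := cs.exists_reduced_word' w
    have hmem : C.α i ∈ C.wroots ω :=
      ((C.main ω.length ω le_rfl hωred).2 (C.α i)).mpr ⟨C.hαmem i, by rw [← hω]; exact h⟩
    obtain ⟨φ, hsub, hprod, hlen2⟩ := C.exch_simple hmem
    have h1 : cs.length (cs.simple i * w) ≤ φ.length := by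
      rw [hω]; rw [← hprod]; exact cs.length_wordProd_le φ
    have h2 : cs.length w = ω.length := by rw [hω]; exact hωred
    omega

end words2

section words3
variable {n : ℕ} {W : Type*} [Group W] {M : CoxeterMatrix (Fin n)}
variable {Λ : Type*} [AddCommGroup Λ] [IsDomain (AddMonoidAlgebra (LaurentPolynomial ℤ) Λ)]
variable {cs : CoxeterSystem M W}

/-- Deletion: every word has a reduced sublist with the same product. -/
lemma RootCtx.del [Fintype W] (C : RootCtx cs Λ) : ∀ (ω : List (Fin n)),
    ∃ φ, φ.Sublist ω ∧ cs.wordProd φ = cs.wordProd ω ∧ cs.IsReduced φ := by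
  intro ω
  induction ω with
  | nil => exact ⟨[], List.Sublist.refl _, rfl, by simp [CoxeterSystem.IsReduced]⟩
  | cons i ω' ih =>
    obtain ⟨φ', hsub', hprod', hred'⟩ := ih
    by_cases hr : cs.IsReduced (i :: φ')
    · refine ⟨i :: φ', List.cons_sublist_cons.mpr hsub', ?_, hr⟩
      rw [cs.wordProd_cons, cs.wordProd_cons, hprod']
    · have hlf : cs.length (cs.wordProd φ') = φ'.length := hred'
      have hup : cs.length (cs.simple i * cs.wordProd φ') < cs.length (cs.wordProd φ') := by
        rcases cs.length_simple_mul (cs.wordProd φ') i with h | h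
        · exfalso
          apply hr
          rw [CoxeterSystem.IsReduced, cs.wordProd_cons, h, hlf, List.length_cons]
        · omega
      have hmem : C.α i ∈ C.wroots φ' :=
        ((C.main φ'.length φ' le_rfl hred').2 (C.α i)).mpr
          ⟨C.hαmem i, (C.simple_descent_iff _ i).mp hup⟩
      obtain ⟨ψ, hsub, hprod, hlen2⟩ := C.exch_simple hmem
      refine ⟨ψ, ?_, ?_, ?_⟩
      · exact (hsub.trans hsub').trans (List.sublist_cons_self i ω')
      · rw [hprod, hprod', cs.wordProd_cons]
      · rw [CoxeterSystem.IsReduced, hprod]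
        rcases cs.length_simple_mul (cs.wordProd φ') i with h | h
        · omega
        · omega

end words3
end DLaux
namespace DLaux
set_option linter.unusedSectionVars false
section chains
variable {n : ℕ} {W : Type*} [Group W] {M : CoxeterMatrix (Fin n)}
variable {Λ : Type*} [AddCommGroup Λ] [IsDomain (AddMonoidAlgebra (LaurentPolynomial ℤ) Λ)]
variable {cs : CoxeterSystem M W}

/-- One step down in the Bruhat order. -/
def bstep (cs : CoxeterSystem M W) : W → W → Prop := fun a b =>
  (∃ t, cs.IsReflection t ∧ a = t * b) ∧ cs.length a < cs.length b

/-- The Bruhat order, defined via chains of reflections. -/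
def below (cs : CoxeterSystem M W) : W → W → Prop := Relation.ReflTransGen (bstep cs)

lemma below_length {v w : W} (h : below cs v w) : cs.length v ≤ cs.length w := by
  induction h with
  | refl => exact le_rfl
  | tail _ hstep ih => exact le_of_lt (lt_of_le_of_lt ih hstep.2)

lemma RootCtx.root_dichot' [Fintype W] (C : RootCtx cs Λ) (w : W) {a : Λ}
    (ha : a ∈ C.Φp) (h : -(C.σ w a) ∉ C.Φp) : C.σ w a ∈ C.Φp := by
  rcases C.root_stab w (Or.inl ha) with h' | h'
  · exact h'
  · exact absurd h' h

lemma RootCtx.refl_pos_root [Fintype W] (C : RootCtx cs Λ) {t : W}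
    (ht : cs.IsReflection t) :
    ∃ u j, t = u * cs.simple j * u⁻¹ ∧ C.σ u (C.α j) ∈ C.Φp := by
  obtain ⟨u, j, rfl⟩ := ht
  by_cases hβ : C.σ u (C.α j) ∈ C.Φp
  · exact ⟨u, j, rfl, hβ⟩
  · refine ⟨u * cs.simple j, j, by group, ?_⟩
    rw [sig_mul, C.sig_simple_alpha, map_neg]
    exact C.root_dichot u (C.hαmem j) hβ

lemma RootCtx.sig_refl_root [Fintype W] (C : RootCtx cs Λ) (u : W) (j : Fin n) :
    C.σ (u * cs.simple j * u⁻¹) (C.σ u (C.α j)) = -(C.σ u (C.α j)) := by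
  rw [sig_mul, sig_mul, sig_inv_apply, C.sig_simple_alpha, map_neg]

/-- Strong exchange property. -/
lemma RootCtx.refl_descent [Fintype W] (C : RootCtx cs Λ) {t w : W}
    (ht : cs.IsReflection t) (hlt : cs.length (t * w) < cs.length w) :
    ∀ ω, cs.IsReduced ω → cs.wordProd ω = w →
    ∃ φ, φ.Sublist ω ∧ cs.wordProd φ = t * w ∧ φ.length + 1 = ω.length := by
  obtain ⟨u, j, htu, hβ⟩ := C.refl_pos_root ht
  set β := C.σ u (C.α j) with hβdef
  have htt : t * t = 1 := ht.mul_self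
  have claim : -(C.σ w⁻¹ β) ∈ C.Φp := by
    by_contra hc
    have hwβ : C.σ w⁻¹ β ∈ C.Φp := C.root_dichot' w⁻¹ hβ hc
    have htβ : C.σ t β = -β := by rw [htu]; exact C.sig_refl_root u j
    have hkey : -(C.σ (t * w)⁻¹ β) ∈ C.Φp := by
      rw [mul_inv_rev, ht.inv, sig_mul, htβ, map_neg, neg_neg]
      exact hwβ
    obtain ⟨χ, hχred, hχ⟩ := cs.exists_reduced_word' (t * w)
    have hmem : β ∈ C.wroots χ :=
      ((C.main χ.length χ le_rfl hχred).2 β).mpr ⟨hβ, by rw [← hχ]; exact hkey⟩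
    rw [hβdef] at hmem
    obtain ⟨φ, hsub, hprod, hlen2⟩ := C.exch hmem
    rw [← htu, ← hχ] at hprod
    have h1 : cs.length (t * (t * w)) ≤ φ.length := hprod ▸ cs.length_wordProd_le φ
    rw [← mul_assoc, htt, one_mul] at h1
    have h2 : cs.length (t * w) = χ.length := by rw [hχ]; exact hχred
    omega
  intro ω hωred hω
  have hmem : β ∈ C.wroots ω :=
    ((C.main ω.length ω le_rfl hωred).2 β).mpr ⟨hβ, by rw [hω]; exact claim⟩
  rw [hβdef] at hmem
  obtain ⟨φ, hsub, hprod, hlen2⟩ := C.exch hmem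
  rw [← htu, hω] at hprod
  exact ⟨φ, hsub, hprod, hlen2⟩

lemma RootCtx.chain_sub [Fintype W] (C : RootCtx cs Λ) {v w : W} (h : below cs v w) :
    ∀ ω, cs.IsReduced ω → cs.wordProd ω = w → ∃ φ, φ.Sublist ω ∧ cs.wordProd φ = v := by
  induction h with
  | refl => exact fun ω _ hω => ⟨ω, List.Sublist.refl _, hω⟩
  | @tail b c hvb hstep ih =>
    intro ω hωred hω
    obtain ⟨⟨t, ht, hb⟩, hlt⟩ := hstep
    obtain ⟨φ₁, hsub₁, hprod₁, _⟩ := C.refl_descent ht (hb ▸ hlt) ω hωred hω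
    obtain ⟨φ₂, hsub₂, hprod₂, hred₂⟩ := RootCtx.del C φ₁
    obtain ⟨φ, hsub, hprod⟩ := ih φ₂ hred₂ (by rw [hprod₂, hprod₁, ← hb])
    exact ⟨φ, (hsub.trans hsub₂).trans hsub₁, hprod⟩

lemma RootCtx.sub_chain [Fintype W] (C : RootCtx cs Λ) : ∀ (N : ℕ) (ω : List (Fin n)),
    ω.length ≤ N → cs.IsReduced ω →
    ∀ φ, φ.Sublist ω → below cs (cs.wordProd φ) (cs.wordProd ω) := by
  intro N
  induction N with
  | zero =>
    intro ω hlen _ φ hsub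
    have hω : ω = [] := List.length_eq_zero_iff.mp (by omega)
    subst hω
    rw [List.sublist_nil.mp hsub]
    exact Relation.ReflTransGen.refl
  | succ N ihN =>
    intro ω hlen hred φ hsub
    match ω, hsub with
    | [], hsub =>
      rw [List.sublist_nil.mp hsub]
      exact Relation.ReflTransGen.refl
    | i :: ω', hsub =>
      have hred' : cs.IsReduced ω' := by
        have := hred.drop 1
        simpa using this
      have hlen' : ω'.length ≤ N := by simp at hlen; omega
      have hlw : cs.length (cs.wordProd (i :: ω')) = ω'.length + 1 := by
        have := hred; rw [CoxeterSystem.IsReduced] at this; simpa using this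
      have hlw' : cs.length (cs.wordProd ω') = ω'.length := hred'
      have hsw : cs.simple i * cs.wordProd (i :: ω') = cs.wordProd ω' := by
        rw [cs.wordProd_cons, ← mul_assoc, cs.simple_mul_simple_self, one_mul]
      have hstep0 : bstep cs (cs.wordProd ω') (cs.wordProd (i :: ω')) :=
        ⟨⟨cs.simple i, cs.isReflection_simple i, hsw.symm⟩, by omega⟩
      rcases List.sublist_cons_iff.mp hsub with hsub' | ⟨φ', rfl, hsub'⟩
      · exact (ihN ω' hlen' hred' φ hsub').tail hstep0
      · -- inner lifting claim
        have inner : ∀ u, below cs u (cs.wordProd ω') →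
            below cs (cs.simple i * u) (cs.wordProd (i :: ω')) ∧
            below cs u (cs.wordProd (i :: ω')) := by
          intro u hu
          induction hu using Relation.ReflTransGen.head_induction_on with
          | refl =>
            constructor
            · rw [← hsw, ← mul_assoc, cs.simple_mul_simple_self, one_mul]
              exact Relation.ReflTransGen.refl
            · exact Relation.ReflTransGen.head hstep0 Relation.ReflTransGen.refl
          | @head a c h' hc ihc =>
            have hac : below cs a (cs.wordProd (i :: ω')) :=
              Relation.ReflTransGen.head h' ihc.2
            refine ⟨?_, hac⟩
            obtain ⟨⟨t, ht, hat⟩, hlt⟩ := h'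
            rcases cs.length_simple_mul a i with h1 | h1
            · -- s_i * a goes up
              rcases cs.length_simple_mul c i with h2 | h2
              · -- s_i * c goes up : conjugate step
                have hconj : cs.IsReflection (cs.simple i * t * (cs.simple i)⁻¹) :=
                  ht.conj (cs.simple i)
                have heq : cs.simple i * a
                    = (cs.simple i * t * (cs.simple i)⁻¹) * (cs.simple i * c) := by
                  rw [hat]; group
                have hlen2 : cs.length (cs.simple i * a)
                    < cs.length (cs.simple i * c) := by
                  have := below_length hc
                  omega
                exact Relation.ReflTransGen.head ⟨⟨_, hconj, heq⟩, hlen2⟩ ihc.1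
              · -- s_i * c goes down : exchange argument
                obtain ⟨χ, hχred, hχ⟩ := cs.exists_reduced_word' (cs.simple i * c)
                have hχlen : χ.length = cs.length c - 1 := by
                  have : cs.length (cs.simple i * c) = χ.length := by
                    rw [hχ]; exact hχred
                  omega
                have hiχ : cs.wordProd (i :: χ) = c := by
                  rw [cs.wordProd_cons, ← hχ, ← mul_assoc, cs.simple_mul_simple_self,
                    one_mul]
                have hiχred : cs.IsReduced (i :: χ) := by
                  rw [CoxeterSystem.IsReduced, hiχ, List.length_cons]
                  have hc1 : 1 ≤ cs.length c := by omega
                  omega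
                obtain ⟨φ₁, hsub₁, hprod₁, hlen₁⟩ :=
                  C.refl_descent ht (hat ▸ hlt) (i :: χ) hiχred hiχ
                rcases List.sublist_cons_iff.mp hsub₁ with hsub₁' | ⟨φ₁', rfl, hsub₁'⟩
                · -- φ₁ ⊑ χ of full length : φ₁ = χ, so s_i * a = c
                  have : φ₁ = χ := hsub₁'.eq_of_length (by simp at hlen₁; omega)
                  subst this
                  have : cs.simple i * a = c := by
                    rw [hat, ← hprod₁, ← hχ, ← mul_assoc, cs.simple_mul_simple_self,
                      one_mul]
                  rw [this]
                  exact ihc.2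
                · -- φ₁ = i :: φ₁' : s_i * a = wordProd φ₁' with φ₁' ⊑ χ
                  have hsa : cs.simple i * a = cs.wordProd φ₁' := by
                    rw [hat, ← hprod₁, cs.wordProd_cons, ← mul_assoc,
                      cs.simple_mul_simple_self, one_mul]
                  have hχN : χ.length ≤ N := by
                    have hcc := below_length hc
                    omega
                  have hblw : below cs (cs.wordProd φ₁') (cs.wordProd χ) :=
                    ihN χ hχN hχred φ₁' hsub₁'
                  rw [← hχ] at hblw
                  rw [hsa]
                  -- below (π φ₁') (s_i * c) and below (s_i * c) ... need chain to top
                  -- s_i * c : we have ihc.1 : below (s_i * c) (π (i::ω'))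
                  exact hblw.trans ihc.1
            · -- s_i * a goes down : single step below a
              have hstep1 : bstep cs (cs.simple i * a) a :=
                ⟨⟨cs.simple i, cs.isReflection_simple i, rfl⟩, by omega⟩
              exact Relation.ReflTransGen.head hstep1 hac
        have := (inner (cs.wordProd φ') (ihN ω' hlen' hred' φ' hsub')).1
        rwa [cs.wordProd_cons]

/-- `BruhatLE` agrees with the chain version of the Bruhat order. -/
lemma RootCtx.bruhat_iff_below [Fintype W] (C : RootCtx cs Λ) (v w : W) :
    BruhatLE cs v w ↔ below cs v w := by
  constructor
  · rintro ⟨ω, hω, hlen, ω', hsub, hv⟩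
    have hred : cs.IsReduced ω := by rw [CoxeterSystem.IsReduced, hω, hlen]
    have := C.sub_chain ω.length ω le_rfl hred ω' hsub
    rwa [hω, hv] at this
  · intro h
    obtain ⟨ω, hlen, hω⟩ := cs.exists_reduced_word w
    have hred : cs.IsReduced ω := hlen
    obtain ⟨φ, hsub, hprod⟩ := C.chain_sub h ω hred hω.symm
    exact ⟨ω, hω.symm, by rw [hω]; exact hlen.symm, φ, hsub, hprod⟩

lemma bruhat_refl (w : W) : BruhatLE cs w w := by
  obtain ⟨ω, hlen, hω⟩ := cs.exists_reduced_word w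
  exact ⟨ω, hω.symm, by rw [hω]; exact hlen.symm, ω, List.Sublist.refl _, hω.symm⟩

end chains
end DLaux
namespace DLaux
set_option linter.unusedSectionVars false
section ops
variable {n : ℕ} {W : Type*} [Group W] {M : CoxeterMatrix (Fin n)}
variable {Λ : Type*} [AddCommGroup Λ] [IsDomain (AddMonoidAlgebra (LaurentPolynomial ℤ) Λ)]
variable {cs : CoxeterSystem M W}

/-- Bundled operator data: an action of `W` on `Q` and coefficient families. -/
structure OpCtx (cs : CoxeterSystem M W) (Λ : Type*) [AddCommGroup Λ] where
  P : W →* (Qf Λ ≃+* Qf Λ)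
  av : Fin n → Qf Λ
  bv : Fin n → Qf Λ

namespace OpCtx

/-- The basic operator. -/
def T (D : OpCtx cs Λ) (i : Fin n) (p : Qf Λ) : Qf Λ :=
  D.av i * p + D.bv i * D.P (cs.simple i) p

/-- Composite of basic operators along a word. -/
def Tcomp (D : OpCtx cs Λ) (ω : List (Fin n)) : Qf Λ → Qf Λ :=
  ω.foldr (fun i g => D.T i ∘ g) id

/-- Coefficients of the expansion of `Tcomp ω` in the `δ_u`. -/
def coef (D : OpCtx cs Λ) : List (Fin n) → W → Qf Λ
  | [], u => if u = 1 then 1 else 0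
  | i :: ω, u => D.av i * coef D ω u +
      D.bv i * D.P (cs.simple i) (coef D ω (cs.simple i * u))

/-- Leading coefficient along a word. -/
def bprod (D : OpCtx cs Λ) : List (Fin n) → Qf Λ
  | [] => 1
  | i :: ω => D.bv i * D.P (cs.simple i) (bprod D ω)

variable (D : OpCtx cs Λ)

lemma P_mul (x y : W) (p : Qf Λ) : D.P (x * y) p = D.P x (D.P y p) := by
  rw [map_mul]; rfl

lemma P_one (p : Qf Λ) : D.P (1 : W) p = p := by rw [map_one]; rfl

@[simp] lemma Tcomp_nil (p : Qf Λ) : D.Tcomp [] p = p := rfl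

lemma Tcomp_cons (i : Fin n) (ω : List (Fin n)) (p : Qf Λ) :
    D.Tcomp (i :: ω) p = D.T i (D.Tcomp ω p) := rfl

lemma coef_nil (u : W) : D.coef [] u = if u = 1 then 1 else 0 := rfl

lemma coef_cons (i : Fin n) (ω : List (Fin n)) (u : W) :
    D.coef (i :: ω) u = D.av i * D.coef ω u +
      D.bv i * D.P (cs.simple i) (D.coef ω (cs.simple i * u)) := rfl

@[simp] lemma bprod_nil : D.bprod [] = 1 := rfl

lemma bprod_cons (i : Fin n) (ω : List (Fin n)) :
    D.bprod (i :: ω) = D.bv i * D.P (cs.simple i) (D.bprod ω) := rfl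

lemma coef_expand [Fintype W] (ω : List (Fin n)) (p : Qf Λ) :
    D.Tcomp ω p = ∑ u : W, D.coef ω u * D.P u p := by
  induction ω with
  | nil =>
    simp only [Tcomp_nil, coef_nil, ite_mul, one_mul, zero_mul]
    rw [Finset.sum_ite_eq' Finset.univ (1 : W) (fun u => D.P u p),
      if_pos (Finset.mem_univ (1 : W))]
    exact (D.P_one p).symm
  | cons i ω ih =>
    rw [Tcomp_cons, T, ih, map_sum, Finset.mul_sum, Finset.mul_sum]
    have hswap : ∀ u : W, D.P (cs.simple i) (D.coef ω u * D.P u p)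
        = D.P (cs.simple i) (D.coef ω u) * D.P (cs.simple i * u) p := by
      intro u
      rw [map_mul, D.P_mul]
    simp only [hswap]
    have hre : ∑ u : W, D.bv i * (D.P (cs.simple i) (D.coef ω u) * D.P (cs.simple i * u) p)
        = ∑ u : W, D.bv i *
          (D.P (cs.simple i) (D.coef ω (cs.simple i * u)) * D.P u p) := by
      apply Fintype.sum_equiv (Equiv.mulLeft (cs.simple i))
      intro u
      simp only [Equiv.coe_mulLeft]
      rw [← mul_assoc (cs.simple i) (cs.simple i) u, cs.simple_mul_simple_self, one_mul]
    rw [hre, ← Finset.sum_add_distrib]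
    apply Finset.sum_congr rfl
    intro u _
    rw [coef_cons]
    ring

lemma coef_support (ω : List (Fin n)) (u : W) (h : D.coef ω u ≠ 0) :
    ∃ φ, φ.Sublist ω ∧ cs.wordProd φ = u := by
  induction ω generalizing u with
  | nil =>
    rw [coef_nil] at h
    by_cases hu : u = 1
    · exact ⟨[], List.Sublist.refl _, by rw [cs.wordProd_nil, hu]⟩
    · rw [if_neg hu] at h
      exact absurd rfl h
  | cons i ω ih =>
    rw [coef_cons] at h
    have : D.av i * D.coef ω u ≠ 0 ∨
        D.bv i * D.P (cs.simple i) (D.coef ω (cs.simple i * u)) ≠ 0 := by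
      by_contra hc
      push_neg at hc
      rw [hc.1, hc.2, add_zero] at h
      exact h rfl
    rcases this with h' | h'
    · have : D.coef ω u ≠ 0 := fun h0 => h' (by rw [h0, mul_zero])
      obtain ⟨φ, hsub, hprod⟩ := ih u this
      exact ⟨φ, hsub.trans (List.sublist_cons_self i ω), hprod⟩
    · have h1 : D.P (cs.simple i) (D.coef ω (cs.simple i * u)) ≠ 0 :=
        fun h0 => h' (by rw [h0, mul_zero])
      have h2 : D.coef ω (cs.simple i * u) ≠ 0 := by
        intro h0
        rw [h0, map_zero] at h1
        exact h1 rfl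
      obtain ⟨φ, hsub, hprod⟩ := ih _ h2
      refine ⟨i :: φ, List.cons_sublist_cons.mpr hsub, ?_⟩
      rw [cs.wordProd_cons, hprod, ← mul_assoc, cs.simple_mul_simple_self, one_mul]

lemma coef_length_lt (ω : List (Fin n)) (u : W) (h : D.coef ω u ≠ 0)
    (hne : u ≠ cs.wordProd ω) : cs.length u < ω.length := by
  obtain ⟨φ, hsub, hprod⟩ := D.coef_support ω u h
  have h1 : cs.length u ≤ φ.length := by
    rw [← hprod]; exact cs.length_wordProd_le φ
  have h2 : φ.length ≤ ω.length := hsub.length_le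
  rcases lt_or_eq_of_le h2 with h3 | h3
  · omega
  · exact absurd (hsub.eq_of_length h3 ▸ hprod) (fun he => hne he.symm)

lemma coef_diag (ω : List (Fin n)) (hred : cs.IsReduced ω) :
    D.coef ω (cs.wordProd ω) = D.bprod ω := by
  induction ω with
  | nil =>
    rw [coef_nil, bprod_nil, if_pos (cs.wordProd_nil)]
  | cons i ω ih =>
    have hred' : cs.IsReduced ω := by
      have := hred.drop 1
      simpa using this
    have hsw : cs.simple i * cs.wordProd (i :: ω) = cs.wordProd ω := by
      rw [cs.wordProd_cons, ← mul_assoc, cs.simple_mul_simple_self, one_mul]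
    have hzero : D.coef ω (cs.wordProd (i :: ω)) = 0 := by
      by_contra hc
      have hne : cs.wordProd (i :: ω) ≠ cs.wordProd ω := by
        intro he
        have l1 : cs.length (cs.wordProd (i :: ω)) = ω.length + 1 := by
          have := hred; rw [CoxeterSystem.IsReduced] at this; simpa using this
        have l2 : cs.length (cs.wordProd ω) = ω.length := hred'
        rw [he, l2] at l1
        omega
      have := D.coef_length_lt ω _ hc hne
      have l1 : cs.length (cs.wordProd (i :: ω)) = ω.length + 1 := by
        have := hred; rw [CoxeterSystem.IsReduced] at this; simpa using this
      omega
    rw [coef_cons, bprod_cons, hzero, mul_zero, zero_add, hsw, ih hred']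

end OpCtx
end ops
end DLaux
namespace DLaux
set_option linter.unusedSectionVars false
section solve
variable {n : ℕ} {W : Type*} [Group W] {M : CoxeterMatrix (Fin n)}
variable {Λ : Type*} [AddCommGroup Λ] [IsDomain (AddMonoidAlgebra (LaurentPolynomial ℤ) Λ)]
variable {cs : CoxeterSystem M W}

/-- Compatibility between operator data and root data. -/
structure Compat (C : RootCtx cs Λ) (D : OpCtx cs Λ) (φf : Λ → Qf Λ) : Prop where
  hbv : ∀ i, D.bv i = φf (C.α i)
  heq : ∀ (u : W) (l : Λ), D.P u (φf l) = φf (C.σ u l)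
  hnz : ∀ a ∈ C.Φp, φf a ≠ 0

variable {C : RootCtx cs Λ} {D : OpCtx cs Λ} {φf : Λ → Qf Λ}

lemma Compat.bprod_eq (hc : Compat C D φf) (ω : List (Fin n)) :
    D.bprod ω = ((C.wroots ω).map φf).prod := by
  induction ω with
  | nil => simp
  | cons i ω ih =>
    rw [D.bprod_cons, ih, map_list_prod (D.P (cs.simple i)), List.map_map]
    have hcomp : (⇑(D.P (cs.simple i)) ∘ φf) = φf ∘ ⇑(C.σ (cs.simple i)) := by
      funext l
      exact hc.heq (cs.simple i) l
    rw [hcomp, ← List.map_map, C.wroots_cons, List.map_cons, List.prod_cons, hc.hbv i]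

lemma Compat.bprod_eq_finset [Fintype W] (hc : Compat C D φf) (ω : List (Fin n))
    (hred : cs.IsReduced ω) :
    D.bprod ω = ∏ a ∈ C.Φp.filter (fun a => -(C.σ (cs.wordProd ω)⁻¹ a) ∈ C.Φp), φf a := by
  obtain ⟨hnd, hiff⟩ := C.main ω.length ω le_rfl hred
  have hfs : (C.wroots ω).toFinset
      = C.Φp.filter (fun a => -(C.σ (cs.wordProd ω)⁻¹ a) ∈ C.Φp) := by
    ext a
    rw [List.mem_toFinset, Finset.mem_filter, hiff a]
  rw [hc.bprod_eq ω, ← List.prod_toFinset φf hnd, hfs]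

lemma Compat.bprod_ne_zero [Fintype W] (hc : Compat C D φf) (ω : List (Fin n))
    (hred : cs.IsReduced ω) : D.bprod ω ≠ 0 := by
  rw [hc.bprod_eq_finset ω hred]
  rw [Finset.prod_ne_zero_iff]
  intro a ha
  exact hc.hnz a (Finset.mem_filter.mp ha).1

/-- The triangular solve: coefficients expressing `δ_w` in terms of the `Tcomp (red v)`. -/
noncomputable def Bm (D : OpCtx cs Λ) (red : W → List (Fin n)) [Fintype W] (w : W) :
    W → Qf Λ :=
  fun v =>
    (if v = w then (D.bprod (red w))⁻¹ else 0) -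
      (D.bprod (red w))⁻¹ *
        ∑ u ∈ (Finset.univ.filter (fun u => cs.length u < cs.length w)).attach,
          D.coef (red w) u.1 * Bm D red u.1 v
termination_by cs.length w
decreasing_by exact (Finset.mem_filter.mp u.2).2

lemma Bm_eq (D : OpCtx cs Λ) (red : W → List (Fin n)) [Fintype W] (w v : W) :
    Bm D red w v =
    (if v = w then (D.bprod (red w))⁻¹ else 0) -
      (D.bprod (red w))⁻¹ *
        ∑ u ∈ (Finset.univ.filter (fun u => cs.length u < cs.length w)).attach,
          D.coef (red w) u.1 * Bm D red u.1 v := by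
  rw [Bm]

section withred
variable (C) (D)
variable [Fintype W] (red : W → List (Fin n))

lemma red_isReduced
    (hred : ∀ v : W, cs.wordProd (red v) = v ∧ (red v).length = cs.length v)
    (v : W) : cs.IsReduced (red v) := by
  rw [CoxeterSystem.IsReduced, (hred v).1, (hred v).2]

lemma Bm_support
    (hred : ∀ v : W, cs.wordProd (red v) = v ∧ (red v).length = cs.length v)
    (hc : Compat C D φf) :
    ∀ (N : ℕ) (w : W), cs.length w ≤ N → ∀ v, Bm D red w v ≠ 0 → below cs v w := by
  intro N
  induction N with
  | zero =>
    intro w hlen v h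
    rw [Bm_eq] at h
    have hempty : Finset.univ.filter (fun u => cs.length u < cs.length w) = ∅ := by
      apply Finset.filter_false_of_mem
      intro u _
      omega
    rw [hempty] at h
    simp only [Finset.attach_empty, Finset.sum_empty, mul_zero, sub_zero] at h
    by_cases hvw : v = w
    · rw [hvw]
      exact Relation.ReflTransGen.refl
    · rw [if_neg hvw] at h
      exact absurd rfl h
  | succ N ih =>
    intro w hlen v h
    rw [Bm_eq] at h
    by_cases hvw : v = w
    · rw [hvw]
      exact Relation.ReflTransGen.refl
    · rw [if_neg hvw, zero_sub, neg_ne_zero] at h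
      have hsum : ∑ u ∈ (Finset.univ.filter
          (fun u => cs.length u < cs.length w)).attach,
          D.coef (red w) u.1 * Bm D red u.1 v ≠ 0 := by
        intro h0
        rw [h0, mul_zero] at h
        exact h rfl
      obtain ⟨u, _, hu⟩ := Finset.exists_ne_zero_of_sum_ne_zero hsum
      have hul : cs.length u.1 < cs.length w := (Finset.mem_filter.mp u.2).2
      have hcoef : D.coef (red w) u.1 ≠ 0 := fun h0 => hu (by rw [h0, zero_mul])
      have hBm : Bm D red u.1 v ≠ 0 := fun h0 => hu (by rw [h0, mul_zero])
      have h1 : below cs v u.1 := ih u.1 (by omega) v hBm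
      obtain ⟨φ, hsub, hprod⟩ := D.coef_support (red w) u.1 hcoef
      have h2 : below cs u.1 w := by
        have := C.sub_chain (red w).length (red w) le_rfl (red_isReduced red hred w)
          φ hsub
        rwa [hprod, (hred w).1] at this
      exact h1.trans h2
end withred

section withred2
variable (C) (D)
variable [Fintype W] (red : W → List (Fin n))

lemma Bm_diag
    (hred : ∀ v : W, cs.wordProd (red v) = v ∧ (red v).length = cs.length v)
    (hc : Compat C D φf) (w : W) :
    Bm D red w w = (D.bprod (red w))⁻¹ := by
  rw [Bm_eq, if_pos rfl]
  have hzero : ∑ u ∈ (Finset.univ.filter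
      (fun u => cs.length u < cs.length w)).attach,
      D.coef (red w) u.1 * Bm D red u.1 w = 0 := by
    apply Finset.sum_eq_zero
    intro u _
    have hul : cs.length u.1 < cs.length w := (Finset.mem_filter.mp u.2).2
    have : Bm D red u.1 w = 0 := by
      by_contra hc2
      have := below_length (Bm_support C D red hred hc (cs.length u.1) u.1 le_rfl w hc2)
      omega
    rw [this, mul_zero]
  rw [hzero, mul_zero, sub_zero]

lemma Bm_spec
    (hred : ∀ v : W, cs.wordProd (red v) = v ∧ (red v).length = cs.length v)
    (hc : Compat C D φf) :
    ∀ (N : ℕ) (w : W), cs.length w ≤ N → ∀ p : Qf Λ,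
      D.P w p = ∑ v : W, Bm D red w v * D.Tcomp (red v) p := by
  intro N
  induction N with
  | zero =>
    intro w hlen p
    -- w = 1? no : length w = 0 means w = 1
    have hw : w = 1 := cs.length_eq_zero_iff.mp (by omega)
    subst hw
    have hempty : Finset.univ.filter (fun u => cs.length u < cs.length (1 : W)) = ∅ := by
      apply Finset.filter_false_of_mem
      intro u _
      omega
    have hstep : ∀ v : W, Bm D red 1 v = if v = 1 then (D.bprod (red 1))⁻¹ else 0 := by
      intro v
      rw [Bm_eq, hempty]
      simp
    calc D.P 1 p = p := D.P_one p
      _ = ∑ v : W, Bm D red 1 v * D.Tcomp (red v) p := by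
          simp only [hstep, ite_mul, zero_mul]
          rw [Finset.sum_ite_eq' Finset.univ (1 : W), if_pos (Finset.mem_univ (1 : W))]
          have hr : cs.IsReduced (red 1) := red_isReduced red hred 1
          have hD1 : D.bprod (red (1 : W)) ≠ 0 := hc.bprod_ne_zero _ hr
          rw [D.coef_expand]
          have hcz : ∀ u : W, u ≠ 1 → D.coef (red (1 : W)) u = 0 := by
            intro u hu
            by_contra hcc
            have := D.coef_length_lt (red 1) u hcc (by rw [(hred 1).1]; exact hu)
            have h2 : (red (1 : W)).length = 0 := by
              rw [(hred 1).2]; simp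
            omega
          rw [Finset.sum_eq_single (1 : W)]
          · have : D.coef (red (1 : W)) 1 = D.bprod (red 1) := by
              have := D.coef_diag (red 1) hr
              rwa [(hred 1).1] at this
            rw [this, D.P_one, ← mul_assoc, inv_mul_cancel₀ hD1, one_mul]
          · intro b _ hb
            rw [hcz b hb, zero_mul]
          · intro hmem
            exact absurd (Finset.mem_univ 1) hmem
  | succ N ih =>
    intro w hlen p
    set Dw := D.bprod (red w) with hDw
    have hr : cs.IsReduced (red w) := red_isReduced red hred w
    have hDnz : Dw ≠ 0 := hc.bprod_ne_zero _ hr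
    set flt := Finset.univ.filter (fun u => cs.length u < cs.length w) with hflt
    set S := ∑ u ∈ flt, D.coef (red w) u * D.P u p with hS
    have expand : ∀ v, Bm D red w v = (if v = w then Dw⁻¹ else 0) -
        Dw⁻¹ * ∑ u ∈ flt.attach, D.coef (red w) u.1 * Bm D red u.1 v := fun v => by
      rw [Bm_eq]
    have hA : ∑ v : W, (if v = w then Dw⁻¹ else 0) * D.Tcomp (red v) p
        = Dw⁻¹ * D.Tcomp (red w) p := by
      simp only [ite_mul, zero_mul]
      rw [Finset.sum_ite_eq' Finset.univ w, if_pos (Finset.mem_univ w)]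
    have hB : ∑ v : W, (Dw⁻¹ * ∑ u ∈ flt.attach,
          D.coef (red w) u.1 * Bm D red u.1 v) * D.Tcomp (red v) p
        = Dw⁻¹ * S := by
      calc ∑ v : W, (Dw⁻¹ * ∑ u ∈ flt.attach,
              D.coef (red w) u.1 * Bm D red u.1 v) * D.Tcomp (red v) p
          = ∑ v : W, ∑ u ∈ flt.attach,
              Dw⁻¹ * (D.coef (red w) u.1 * (Bm D red u.1 v * D.Tcomp (red v) p)) := by
            apply Finset.sum_congr rfl
            intro v _
            rw [Finset.mul_sum, Finset.sum_mul]
            apply Finset.sum_congr rfl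
            intro u _
            ring
        _ = ∑ u ∈ flt.attach, ∑ v : W,
              Dw⁻¹ * (D.coef (red w) u.1 * (Bm D red u.1 v * D.Tcomp (red v) p)) :=
            Finset.sum_comm
        _ = ∑ u ∈ flt.attach, Dw⁻¹ * (D.coef (red w) u.1 * D.P u.1 p) := by
            apply Finset.sum_congr rfl
            intro u _
            rw [← Finset.mul_sum, ← Finset.mul_sum]
            congr 1
            congr 1
            exact (ih u.1 (by
              have := (Finset.mem_filter.mp u.2).2
              omega) p).symm
        _ = Dw⁻¹ * S := by
            rw [hS, ← Finset.sum_attach flt (fun u => D.coef (red w) u * D.P u p),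
              Finset.mul_sum]
    have hwflt : w ∉ flt := by
      rw [hflt]
      simp
    have hT : D.Tcomp (red w) p = D.coef (red w) w * D.P w p + S := by
      rw [D.coef_expand]
      have hsub0 : ∑ u ∈ insert w flt, D.coef (red w) u * D.P u p
          = ∑ u : W, D.coef (red w) u * D.P u p := by
        apply Finset.sum_subset (Finset.subset_univ _)
        intro x _ hx
        have hxw : x ≠ w := by
          intro hh
          exact hx (hh ▸ Finset.mem_insert_self w flt)
        have hxl : ¬ cs.length x < cs.length w := by
          intro hh
          exact hx (Finset.mem_insert_of_mem (by rw [hflt]; simp [hh]))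
        have : D.coef (red w) x = 0 := by
          by_contra hcc
          have := D.coef_length_lt (red w) x hcc (by rw [(hred w).1]; exact hxw)
          rw [(hred w).2] at this
          omega
        rw [this, zero_mul]
      rw [← hsub0, Finset.sum_insert hwflt]
    have hdiag : D.coef (red w) w = Dw := by
      have := D.coef_diag (red w) hr
      rwa [(hred w).1] at this
    symm
    calc ∑ v : W, Bm D red w v * D.Tcomp (red v) p
        = ∑ v : W, ((if v = w then Dw⁻¹ else 0) -
            Dw⁻¹ * ∑ u ∈ flt.attach, D.coef (red w) u.1 * Bm D red u.1 v) *
            D.Tcomp (red v) p := by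
          apply Finset.sum_congr rfl
          intro v _
          rw [expand v]
      _ = (∑ v : W, (if v = w then Dw⁻¹ else 0) * D.Tcomp (red v) p) -
          ∑ v : W, (Dw⁻¹ * ∑ u ∈ flt.attach,
            D.coef (red w) u.1 * Bm D red u.1 v) * D.Tcomp (red v) p := by
          rw [← Finset.sum_sub_distrib]
          apply Finset.sum_congr rfl
          intro v _
          ring
      _ = Dw⁻¹ * D.Tcomp (red w) p - Dw⁻¹ * S := by rw [hA, hB]
      _ = Dw⁻¹ * (Dw * D.P w p + S) - Dw⁻¹ * S := by rw [hT, hdiag]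
      _ = Dw⁻¹ * Dw * D.P w p := by ring
      _ = D.P w p := by rw [inv_mul_cancel₀ hDnz, one_mul]
end withred2
end solve
end DLaux
namespace DLaux
set_option linter.unusedSectionVars false
section dede
variable {n : ℕ} {W : Type*} [Group W] {M : CoxeterMatrix (Fin n)}
variable {Λ : Type*} [AddCommGroup Λ] [IsDomain (AddMonoidAlgebra (LaurentPolynomial ℤ) Λ)]
variable {cs : CoxeterSystem M W}

/-- Dedekind's lemma: the `δ_u` are linearly independent over `Q`. -/
lemma dede [Fintype W] (P : W →* (Qf Λ ≃+* Qf Λ))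
    (hinj : ∀ u u' : W, (∀ p : Qf Λ, P u p = P u' p) → u = u')
    (f : W → Qf Λ) (hf : ∀ p : Qf Λ, ∑ u : W, f u * P u p = 0) : ∀ u, f u = 0 := by
  set g : W → (Qf Λ →* Qf Λ) := fun u => ((P u : Qf Λ ≃+* Qf Λ) : Qf Λ →+* Qf Λ).toMonoidHom
    with hg
  have hginj : Function.Injective g := by
    intro u u' h
    apply hinj
    intro p
    exact DFunLike.congr_fun h p
  have li : LinearIndependent (Qf Λ) (fun u : W => ⇑(g u)) :=
    (linearIndependent_monoidHom (Qf Λ) (Qf Λ)).comp g hginj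
  intro u
  refine Fintype.linearIndependent_iff.mp li f ?_ u
  funext p
  have : (∑ u : W, f u • ⇑(g u)) p = ∑ u : W, f u * P u p := by
    rw [Finset.sum_apply]
    apply Finset.sum_congr rfl
    intro v _
    rfl
  rw [this, hf p]
  rfl

variable {C : RootCtx cs Λ} {D : OpCtx cs Λ} {φf : Λ → Qf Λ}

/-- Linear independence of the composite operators `Tcomp (red v)`. -/
lemma tau_indep [Fintype W] (red : W → List (Fin n))
    (hred : ∀ v : W, cs.wordProd (red v) = v ∧ (red v).length = cs.length v)
    (hc : Compat C D φf)
    (hinj : ∀ u u' : W, (∀ p : Qf Λ, D.P u p = D.P u' p) → u = u')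
    (g : W → Qf Λ) (hg : ∀ p : Qf Λ, ∑ v : W, g v * D.Tcomp (red v) p = 0) :
    ∀ v, g v = 0 := by
  have hexp : ∀ p : Qf Λ, ∑ u : W, (∑ v : W, g v * D.coef (red v) u) * D.P u p = 0 := by
    intro p
    have h1 : ∑ u : W, (∑ v : W, g v * D.coef (red v) u) * D.P u p
        = ∑ v : W, g v * D.Tcomp (red v) p := by
      calc ∑ u : W, (∑ v : W, g v * D.coef (red v) u) * D.P u p
          = ∑ u : W, ∑ v : W, g v * (D.coef (red v) u * D.P u p) := by
            apply Finset.sum_congr rfl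
            intro u _
            rw [Finset.sum_mul]
            apply Finset.sum_congr rfl
            intro v _
            ring
        _ = ∑ v : W, ∑ u : W, g v * (D.coef (red v) u * D.P u p) := Finset.sum_comm
        _ = ∑ v : W, g v * D.Tcomp (red v) p := by
            apply Finset.sum_congr rfl
            intro v _
            rw [D.coef_expand, Finset.mul_sum]
    rw [h1, hg p]
  have hzero : ∀ u : W, ∑ v : W, g v * D.coef (red v) u = 0 :=
    dede D.P hinj _ hexp
  by_contra hcon
  push_neg at hcon
  obtain ⟨v₁, hv₁⟩ := hcon
  have hne : (Finset.univ.filter (fun v => g v ≠ 0)).Nonempty :=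
    ⟨v₁, Finset.mem_filter.mpr ⟨Finset.mem_univ _, hv₁⟩⟩
  obtain ⟨v₀, hv₀mem, hv₀max⟩ := Finset.exists_max_image _ cs.length hne
  have hv₀ : g v₀ ≠ 0 := (Finset.mem_filter.mp hv₀mem).2
  have hstep := hzero v₀
  rw [Finset.sum_eq_single v₀] at hstep
  · have hdiag : D.coef (red v₀) v₀ = D.bprod (red v₀) := by
      have := D.coef_diag (red v₀) (red_isReduced red hred v₀)
      rwa [(hred v₀).1] at this
    rw [hdiag] at hstep
    rcases mul_eq_zero.mp hstep with h' | h'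
    · exact hv₀ h'
    · exact hc.bprod_ne_zero (red v₀) (red_isReduced red hred v₀) h'
  · intro b _ hb
    by_cases hgb : g b = 0
    · rw [hgb, zero_mul]
    · have hble : cs.length b ≤ cs.length v₀ :=
        hv₀max b (Finset.mem_filter.mpr ⟨Finset.mem_univ _, hgb⟩)
      have : D.coef (red b) v₀ = 0 := by
        by_contra hcc
        have hne2 : v₀ ≠ cs.wordProd (red b) := by
          rw [(hred b).1]
          exact fun h => hb h.symm
        have hlt := D.coef_length_lt (red b) v₀ hcc hne2
        rw [(hred b).2] at hlt
        omega
      rw [this, mul_zero]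
  · intro hmem
    exact absurd (Finset.mem_univ v₀) hmem

/-- Master solving lemma : unique expansion of `∑ c_u δ_u` in the `Tcomp (red v)`. -/
lemma basis_solve [Fintype W] (red : W → List (Fin n))
    (hred : ∀ v : W, cs.wordProd (red v) = v ∧ (red v).length = cs.length v)
    (hc : Compat C D φf)
    (hinj : ∀ u u' : W, (∀ p : Qf Λ, D.P u p = D.P u' p) → u = u')
    (c : W → Qf Λ) :
    ∃! b : W → Qf Λ, ∀ p : Qf Λ,
      (∑ u : W, c u * D.P u p) = ∑ v : W, b v * D.Tcomp (red v) p := by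
  have hb₀ : ∀ p : Qf Λ, (∑ u : W, c u * D.P u p)
      = ∑ v : W, (∑ u : W, c u * Bm D red u v) * D.Tcomp (red v) p := by
    intro p
    calc ∑ u : W, c u * D.P u p
        = ∑ u : W, c u * ∑ v : W, Bm D red u v * D.Tcomp (red v) p := by
          apply Finset.sum_congr rfl
          intro u _
          rw [Bm_spec C D red hred hc (cs.length u) u le_rfl p]
      _ = ∑ u : W, ∑ v : W, c u * (Bm D red u v * D.Tcomp (red v) p) := by
          apply Finset.sum_congr rfl
          intro u _
          rw [Finset.mul_sum]
      _ = ∑ v : W, ∑ u : W, c u * (Bm D red u v * D.Tcomp (red v) p) := Finset.sum_comm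
      _ = ∑ v : W, (∑ u : W, c u * Bm D red u v) * D.Tcomp (red v) p := by
          apply Finset.sum_congr rfl
          intro v _
          rw [Finset.sum_mul]
          apply Finset.sum_congr rfl
          intro u _
          ring
  refine ⟨fun v => ∑ u : W, c u * Bm D red u v, hb₀, ?_⟩
  intro b' hb'
  have hg : ∀ p : Qf Λ, ∑ v : W,
      (b' v - ∑ u : W, c u * Bm D red u v) * D.Tcomp (red v) p = 0 := by
    intro p
    simp only [sub_mul]
    rw [Finset.sum_sub_distrib, ← hb' p, ← hb₀ p, sub_self]
  have hzero := tau_indep red hred hc hinj _ hg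
  funext v
  exact sub_eq_zero.mp (hzero v)

end dede
end DLaux
open DLaux in
theorem delta_expansion_in_Demazure_Lusztig_bases [Fintype W]
    (σ : W →* (Λ ≃+ Λ)) (hfaith : Function.Injective σ)
    (Φp : Finset Λ) (α : Fin n → Λ) (αv : Fin n → (Λ →+ ℤ))
    (hαmem : ∀ i, α i ∈ Φp)
    (hrefl : ∀ (i : Fin n) (l : Λ), σ (cs.simple i) l = l - αv i l • α i)
    (hpair : ∀ i, αv i (α i) = 2)
    (hperm : ∀ i, ∀ b ∈ Φp, b ≠ α i → σ (cs.simple i) b ∈ Φp)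
    (hdisj : ∀ b ∈ Φp, -b ∉ Φp)
    (hreduced : ∀ b ∈ Φp, b + b ∉ Φp)
    -- the action of W on Q, fixing q^{1/2}, with w(e^λ) = e^{wλ}; δ_w p = π w p
    (π : W →* (Qf Λ ≃+* Qf Λ))
    (hπE : ∀ (w : W) (l : Λ), π w (E l) = E (σ w l))
    (hπq : ∀ w : W, π w (qh Λ) = qh Λ)
    -- a choice of reduced word for each element of W, defining τ^±_v for v ∈ W
    (red : W → List (Fin n))
    (hred : ∀ v : W, cs.wordProd (red v) = v ∧ (red v).length = cs.length v)
    (w : W) :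
    -- existence and uniqueness of the coefficients b⁺_{w,v}
    (∃! bp : W → Qf Λ, ∀ p : Qf Λ, π w p = ∑ v : W, bp v * tauPcomp cs α π (red v) p) ∧
    -- existence and uniqueness of the coefficients b⁻_{w,v}
    (∃! bm : W → Qf Λ, ∀ p : Qf Λ, π w p = ∑ v : W, bm v * tauMcomp cs α π (red v) p) ∧
    -- support and diagonal value of b⁺
    (∀ bp : W → Qf Λ, (∀ p : Qf Λ, π w p = ∑ v : W, bp v * tauPcomp cs α π (red v) p) →
      (∀ v : W, ¬ BruhatLE cs v w → bp v = 0) ∧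
      bp w = ∏ a ∈ Φp.filter (fun a => -(σ w⁻¹ a) ∈ Φp), (1 - E (-a)) / (qh Λ ^ 2 - E a)) ∧
    -- support and diagonal value of b⁻
    (∀ bm : W → Qf Λ, (∀ p : Qf Λ, π w p = ∑ v : W, bm v * tauMcomp cs α π (red v) p) →
      (∀ v : W, ¬ BruhatLE cs v w → bm v = 0) ∧
      bm w = ∏ a ∈ Φp.filter (fun a => -(σ w⁻¹ a) ∈ Φp), (1 - E a) / (1 - qh Λ ^ 2 * E (-a))) ∧
    -- {τ⁺_v} is a basis of the left Q-vector space Q_W = ⊕_u Q·δ_u: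
    (∀ c : W → Qf Λ, ∃! b : W → Qf Λ,
      ∀ p : Qf Λ, (∑ u : W, c u * π u p) = ∑ v : W, b v * tauPcomp cs α π (red v) p) ∧
    -- {τ⁻_v} is a basis of the left Q-vector space Q_W = ⊕_u Q·δ_u:
    (∀ c : W → Qf Λ, ∃! b : W → Qf Λ,
      ∀ p : Qf Λ, (∑ u : W, c u * π u p) = ∑ v : W, b v * tauMcomp cs α π (red v) p) := by
  classical
  let C : RootCtx cs Λ := ⟨σ, Φp, α, αv, hfaith, hαmem, hrefl, hpair, hperm, hdisj⟩
  let DP : OpCtx cs Λ := ⟨π, fun i => (qh Λ ^ 2 - 1) / (1 - E (α i)),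
    fun i => (qh Λ ^ 2 - E (α i)) / (1 - E (-(α i)))⟩
  let DM : OpCtx cs Λ := ⟨π, fun i => (qh Λ ^ 2 - 1) / (1 - E (α i)),
    fun i => (1 - qh Λ ^ 2 * E (-(α i))) / (1 - E (α i))⟩
  let φP : Λ → Qf Λ := fun l => (qh Λ ^ 2 - E l) / (1 - E (-l))
  let φM : Λ → Qf Λ := fun l => (1 - qh Λ ^ 2 * E (-l)) / (1 - E l)
  have hEneg : ∀ (u : W) (l : Λ), π u (E (-l)) = E (-(σ u l)) := by
    intro u l
    rw [hπE]
    congr 1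
    exact map_neg (σ u) l
  have hq2 : ∀ u : W, π u (qh Λ ^ 2) = qh Λ ^ 2 := by
    intro u
    rw [map_pow, hπq]
  have hcomP : Compat C DP φP := by
    refine ⟨fun i => rfl, ?_, ?_⟩
    · intro u l
      show π u ((qh Λ ^ 2 - E l) / (1 - E (-l)))
        = (qh Λ ^ 2 - E (σ u l)) / (1 - E (-(σ u l)))
      rw [map_div₀, map_sub, map_sub, map_one, hq2, hπE, hEneg]
    · intro a ha
      apply div_ne_zero
      · exact sub_ne_zero.mpr (qh_sq_ne_E a)
      · exact sub_ne_zero.mpr (Ne.symm (E_ne_one (neg_ne_zero.mpr (C.mem_ne_zero ha))))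
  have hcomM : Compat C DM φM := by
    refine ⟨fun i => rfl, ?_, ?_⟩
    · intro u l
      show π u ((1 - qh Λ ^ 2 * E (-l)) / (1 - E l))
        = (1 - qh Λ ^ 2 * E (-(σ u l))) / (1 - E (σ u l))
      rw [map_div₀, map_sub, map_sub, map_one, map_mul, hq2, hEneg, hπE]
    · intro a ha
      apply div_ne_zero
      · exact sub_ne_zero.mpr (Ne.symm (qh_sq_E_ne_one (-a)))
      · exact sub_ne_zero.mpr (Ne.symm (E_ne_one (C.mem_ne_zero ha)))
  have hinj : ∀ u u' : W, (∀ p : Qf Λ, π u p = π u' p) → u = u' := by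
    intro u u' h
    apply hfaith
    apply DFunLike.ext
    intro l
    exact E_inj (by rw [← hπE, ← hπE, h (E l)])
  -- uniqueness helper
  have huniq : ∀ (D : OpCtx cs Λ) (φf : Λ → Qf Λ), Compat C D φf →
      (∀ u u' : W, (∀ p : Qf Λ, D.P u p = D.P u' p) → u = u') →
      ∀ b₁ b₂ : W → Qf Λ,
      (∀ p : Qf Λ, ∑ v : W, b₁ v * D.Tcomp (red v) p
        = ∑ v : W, b₂ v * D.Tcomp (red v) p) → b₁ = b₂ := by
    intro D φf hc hinjD b₁ b₂ hb
    have hg : ∀ p : Qf Λ, ∑ v : W, (b₁ v - b₂ v) * D.Tcomp (red v) p = 0 := by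
      intro p
      simp only [sub_mul]
      rw [Finset.sum_sub_distrib, hb p, sub_self]
    have hzero := tau_indep red hred hc hinjD _ hg
    funext v
    exact sub_eq_zero.mp (hzero v)
  refine ⟨?_, ?_, ?_, ?_, ?_, ?_⟩
  · -- existence and uniqueness of b⁺
    refine ⟨Bm DP red w, ?_, ?_⟩
    · intro p
      exact Bm_spec C DP red hred hcomP (cs.length w) w le_rfl p
    · intro b' hb'
      exact huniq DP φP hcomP hinj b' (Bm DP red w) (fun p =>
        (hb' p).symm.trans (Bm_spec C DP red hred hcomP (cs.length w) w le_rfl p))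
  · -- existence and uniqueness of b⁻
    refine ⟨Bm DM red w, ?_, ?_⟩
    · intro p
      exact Bm_spec C DM red hred hcomM (cs.length w) w le_rfl p
    · intro b' hb'
      exact huniq DM φM hcomM hinj b' (Bm DM red w) (fun p =>
        (hb' p).symm.trans (Bm_spec C DM red hred hcomM (cs.length w) w le_rfl p))
  · -- support and diagonal of b⁺
    intro bp hbp
    have hbpBm : bp = Bm DP red w := by
      exact huniq DP φP hcomP hinj bp (Bm DP red w) (fun p =>
        (hbp p).symm.trans (Bm_spec C DP red hred hcomP (cs.length w) w le_rfl p))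
    subst hbpBm
    constructor
    · intro v hv
      by_contra h0
      exact hv ((C.bruhat_iff_below v w).mpr
        (Bm_support C DP red hred hcomP (cs.length w) w le_rfl v h0))
    · rw [Bm_diag C DP red hred hcomP w]
      have hfin := hcomP.bprod_eq_finset (red w) (red_isReduced red hred w)
      rw [(hred w).1] at hfin
      rw [hfin, ← Finset.prod_inv_distrib]
      apply Finset.prod_congr rfl
      intro a _
      show ((qh Λ ^ 2 - E a) / (1 - E (-a)))⁻¹ = (1 - E (-a)) / (qh Λ ^ 2 - E a)
      rw [inv_div]
  · -- support and diagonal of b⁻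
    intro bm hbm
    have hbmBm : bm = Bm DM red w := by
      exact huniq DM φM hcomM hinj bm (Bm DM red w) (fun p =>
        (hbm p).symm.trans (Bm_spec C DM red hred hcomM (cs.length w) w le_rfl p))
    subst hbmBm
    constructor
    · intro v hv
      by_contra h0
      exact hv ((C.bruhat_iff_below v w).mpr
        (Bm_support C DM red hred hcomM (cs.length w) w le_rfl v h0))
    · rw [Bm_diag C DM red hred hcomM w]
      have hfin := hcomM.bprod_eq_finset (red w) (red_isReduced red hred w)
      rw [(hred w).1] at hfin
      rw [hfin, ← Finset.prod_inv_distrib]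
      apply Finset.prod_congr rfl
      intro a _
      show ((1 - qh Λ ^ 2 * E (-a)) / (1 - E a))⁻¹
        = (1 - E a) / (1 - qh Λ ^ 2 * E (-a))
      rw [inv_div]
  · -- {τ⁺} is a basis
    intro c
    exact basis_solve red hred hcomP hinj c
  · -- {τ⁻} is a basis
    intro c
    exact basis_solve red hred hcomM hinj c
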